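/- Assume m = n. Let C be a Delsarte code in the space of m×n matrices over 𝔽_q, and define ρ(X) = min{ρ_C(X), ρ_{Cᵀ}(X)} for X ∈ Σ(E), where Cᵀ = {Mᵗ : M ∈ C}. Then P = (E, ρ) is a (q,m)-demi-polymatroid; its conullity function is given by ν*(X) = max{dim C(X), dim Cᵀ(X)} for X ∈ Σ(E); and its generalized weights satisfy d_r(P) = min{d_r(P(C)), d_r(P(Cᵀ))} for r = 1, …, ρ(E). -/

import Mathlib

set_option linter.unusedSectionVars false

open Module Matrix

variable {F : Type*} [Field F] [Fintype F] {n : ℕ}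

/-- The orthogonal complement of a subspace of `𝔽_q^n` with respect to the standard dot product. -/
def perp (X : Submodule F (Fin n → F)) : Submodule F (Fin n → F) where
  carrier := {x | ∀ y ∈ X, dotProduct x y = 0}
  add_mem' := fun {a b} ha hb y hy => by
    rw [Set.mem_setOf_eq] at *
    rw [add_dotProduct, ha y hy, hb y hy, add_zero]
  zero_mem' := fun y hy => zero_dotProduct y
  smul_mem' := fun c a ha y hy => by
    rw [Set.mem_setOf_eq] at *
    rw [smul_dotProduct, ha y hy, smul_zero]

/-- The dual rank function `ρ*(X) = ρ(X^⊥) + m·dim X − ρ(E)`. -/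
noncomputable def dualRho (m : ℕ) (rho : Submodule F (Fin n → F) → ℤ) (X : Submodule F (Fin n → F)) : ℤ :=
  rho (perp X) + (m : ℤ) * (finrank F X : ℤ) - rho ⊤

/-- The nullity function `ν(X) = m·dim X − ρ(X)`. -/
noncomputable def nullity (m : ℕ) (rho : Submodule F (Fin n → F) → ℤ) (X : Submodule F (Fin n → F)) : ℤ :=
  (m : ℤ) * (finrank F X : ℤ) - rho X

/-- The conullity function `ν*(X) = ρ(E) − ρ(X^⊥)`. -/
def coNull (rho : Submodule F (Fin n → F) → ℤ) (X : Submodule F (Fin n → F)) : ℤ :=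
  rho ⊤ - rho (perp X)

/-- The `r`-th generalized weight `d_r = min{dim X : ν*(X) ≥ r}`. -/
noncomputable def genW (rho : Submodule F (Fin n → F) → ℤ) (r : ℤ) : ℕ :=
  sInf {d : ℕ | ∃ X : Submodule F (Fin n → F), finrank F X = d ∧ r ≤ coNull rho X}

/-- `h(x) = max{ν(X) : dim X = x}`. -/
noncomputable def hFun (m : ℕ) (rho : Submodule F (Fin n → F) → ℤ) (x : ℕ) : ℤ :=
  sSup {v : ℤ | ∃ X : Submodule F (Fin n → F), finrank F X = x ∧ v = nullity m rho X}

/-- `h*(x) = max{ν*(X) : dim X = x}`. -/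
noncomputable def hStar (rho : Submodule F (Fin n → F) → ℤ) (x : ℕ) : ℤ :=
  sSup {v : ℤ | ∃ X : Submodule F (Fin n → F), finrank F X = x ∧ v = coNull rho X}

/-- A `(q,m)`-polymatroid on `E = 𝔽_q^n`. -/
structure QMPolymatroid (F : Type*) [Field F] [Fintype F] (n m : ℕ) where
  rho : Submodule F (Fin n → F) → ℤ
  rho_nonneg : ∀ X, 0 ≤ rho X
  rho_le : ∀ X, rho X ≤ (m : ℤ) * (finrank F X : ℤ)
  rho_mono : ∀ ⦃X Y⦄, X ≤ Y → rho X ≤ rho Y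
  rho_submodular : ∀ X Y, rho (X ⊔ Y) + rho (X ⊓ Y) ≤ rho X + rho Y

/-- A `(q,m)`-demi-polymatroid on `E = 𝔽_q^n`. -/
structure QMDemiPolymatroid (F : Type*) [Field F] [Fintype F] (n m : ℕ) where
  rho : Submodule F (Fin n → F) → ℤ
  rho_nonneg : ∀ X, 0 ≤ rho X
  rho_le : ∀ X, rho X ≤ (m : ℤ) * (finrank F X : ℤ)
  rho_mono : ∀ ⦃X Y⦄, X ≤ Y → rho X ≤ rho Y
  dual_nonneg : ∀ X, 0 ≤ dualRho m rho X
  dual_le : ∀ X, dualRho m rho X ≤ (m : ℤ) * (finrank F X : ℤ)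
  dual_mono : ∀ ⦃X Y⦄, X ≤ Y → dualRho m rho X ≤ dualRho m rho Y

section Codes

variable {m : ℕ}

/-- The row space of a matrix. -/
def rowSpace (A : Matrix (Fin m) (Fin n) F) : Submodule F (Fin n → F) :=
  Submodule.span F (Set.range A)

theorem rowSpace_le_iff (A : Matrix (Fin m) (Fin n) F) (X : Submodule F (Fin n → F)) :
    rowSpace A ≤ X ↔ ∀ i, A i ∈ X := by
  rw [rowSpace, Submodule.span_le]; exact Set.range_subset_iff

/-- Matrices whose row space is contained in `X`. -/
def supportedOn (m : ℕ) (X : Submodule F (Fin n → F)) :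
    Submodule F (Matrix (Fin m) (Fin n) F) where
  carrier := {A | rowSpace A ≤ X}
  add_mem' := fun {A B} hA hB => by
    rw [Set.mem_setOf_eq, rowSpace_le_iff] at *
    exact fun i => X.add_mem (hA i) (hB i)
  zero_mem' := by
    rw [Set.mem_setOf_eq, rowSpace_le_iff]
    exact fun i => X.zero_mem
  smul_mem' := fun c A hA => by
    rw [Set.mem_setOf_eq, rowSpace_le_iff] at *
    exact fun i => X.smul_mem c (hA i)

/-- `C(X)`: the subspace of a Delsarte code `C` of matrices whose row space lies in `X`. -/
def subcode (C : Submodule F (Matrix (Fin m) (Fin n) F)) (X : Submodule F (Fin n → F)) :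
    Submodule F (Matrix (Fin m) (Fin n) F) :=
  C ⊓ supportedOn m X

/-- The rank function `ρ_C(X) = dim C − dim C(X^⊥)` of a Delsarte code. -/
noncomputable def rhoC (C : Submodule F (Matrix (Fin m) (Fin n) F))
    (X : Submodule F (Fin n → F)) : ℤ :=
  (finrank F C : ℤ) - (finrank F (subcode C (perp X)) : ℤ)

/-- The generalized weight `d_r(C) = min{dim X : dim C(X) ≥ r}` of a Delsarte code. -/
noncomputable def codeWeight (C : Submodule F (Matrix (Fin m) (Fin n) F)) (r : ℤ) : ℕ :=
  sInf {d : ℕ | ∃ X : Submodule F (Fin n → F),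
    finrank F X = d ∧ r ≤ (finrank F (subcode C X) : ℤ)}

/-- The trace dual of a Delsarte code. -/
def traceDual (C : Submodule F (Matrix (Fin m) (Fin n) F)) :
    Submodule F (Matrix (Fin m) (Fin n) F) where
  carrier := {N | ∀ M ∈ C, Matrix.trace (M * Nᵀ) = 0}
  add_mem' := fun {N₁ N₂} h1 h2 M hM => by
    rw [Matrix.transpose_add, Matrix.mul_add, Matrix.trace_add, h1 M hM, h2 M hM, add_zero]
  zero_mem' := fun M hM => by simp
  smul_mem' := fun c N hN M hM => by
    rw [Matrix.transpose_smul, Matrix.mul_smul, Matrix.trace_smul, hN M hM, smul_zero]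

/-- The transposed code `Cᵀ = {Mᵗ : M ∈ C}` of a code of square matrices. -/
def transposeCode (C : Submodule F (Matrix (Fin n) (Fin n) F)) :
    Submodule F (Matrix (Fin n) (Fin n) F) where
  carrier := {A | Aᵀ ∈ C}
  add_mem' := fun {A B} hA hB => by
    rw [Set.mem_setOf_eq, Matrix.transpose_add]; exact C.add_mem hA hB
  zero_mem' := by
    rw [Set.mem_setOf_eq, Matrix.transpose_zero]; exact C.zero_mem
  smul_mem' := fun c A hA => by
    rw [Set.mem_setOf_eq, Matrix.transpose_smul]; exact C.smul_mem c hA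

/-- The maximum rank of a matrix in a subspace of matrices. -/
noncomputable def maxrank (A : Submodule F (Matrix (Fin m) (Fin n) F)) : ℕ :=
  sSup {r : ℕ | ∃ M ∈ A, M.rank = r}

/-- An optimal anticode: a subspace `𝒜` of `𝕄` with `dim 𝒜 = m · maxrank 𝒜`. -/
def IsOptimalAnticode (A : Submodule F (Matrix (Fin m) (Fin n) F)) : Prop :=
  finrank F A = m * maxrank A

/-- Ravagnani's generalized weight `a_r(C)`. -/
noncomputable def aWeight (C : Submodule F (Matrix (Fin m) (Fin n) F)) (r : ℤ) : ℕ :=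
  (sInf {d : ℕ | ∃ A : Submodule F (Matrix (Fin m) (Fin n) F),
    IsOptimalAnticode A ∧ finrank F A = d ∧ r ≤ (finrank F (A ⊓ C : Submodule F _) : ℤ)}) / m

end Codes


section AuxLemmas

variable {F : Type*} [Field F] [Fintype F] {n : ℕ}

lemma mem_perp {X : Submodule F (Fin n → F)} {x : Fin n → F} :
    x ∈ perp X ↔ ∀ y ∈ X, dotProduct x y = 0 := Iff.rfl

lemma toDual_pi (x y : Fin n → F) :
    (Pi.basisFun F (Fin n)).toDual x y = dotProduct y x := by
  conv_lhs => rw [← (Pi.basisFun F (Fin n)).sum_repr y]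
  rw [map_sum]
  simp only [_root_.map_smul, smul_eq_mul, LinearMap.smul_apply]
  have : ∀ i : Fin n, (Pi.basisFun F (Fin n)).toDual x (Pi.basisFun F (Fin n) i) = x i := by
    intro i; rw [Basis.toDual_eq_repr, Pi.basisFun_repr]
  simp only [this, Pi.basisFun_repr, dotProduct, mul_comm]

lemma perp_eq_comap (X : Submodule F (Fin n → F)) :
    perp X = X.dualAnnihilator.comap
      ((Pi.basisFun F (Fin n)).toDualEquiv : (Fin n → F) →ₗ[F] Module.Dual F (Fin n → F)) := by
  ext x
  simp only [mem_perp, Submodule.mem_comap, LinearEquiv.coe_coe, Basis.toDualEquiv_apply,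
    Submodule.mem_dualAnnihilator]
  constructor
  · intro h y hy; rw [toDual_pi, dotProduct_comm]; exact h y hy
  · intro h y hy; rw [← h y hy, toDual_pi, dotProduct_comm]

lemma finrank_perp_add (X : Submodule F (Fin n → F)) :
    finrank F (perp X) + finrank F X = n := by
  have h1 : finrank F X.dualAnnihilator = finrank F ((Fin n → F) ⧸ X) :=
    (LinearEquiv.finrank_eq (Subspace.quotEquivAnnihilator X)).symm
  rw [perp_eq_comap, Submodule.comap_equiv_eq_map_symm, LinearEquiv.finrank_map_eq, h1]
  rw [Submodule.finrank_quotient_add_finrank, finrank_pi]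
  simp

lemma perp_antitone {X Y : Submodule F (Fin n → F)} (h : X ≤ Y) : perp Y ≤ perp X :=
  fun _ hx y hy => hx y (h hy)

lemma le_perp_perp (X : Submodule F (Fin n → F)) : X ≤ perp (perp X) := by
  intro x hx y hy
  rw [dotProduct_comm]
  exact hy x hx

lemma perp_perp (X : Submodule F (Fin n → F)) : perp (perp X) = X := by
  refine (Submodule.eq_of_le_of_finrank_eq (le_perp_perp X) ?_).symm
  have h1 := finrank_perp_add X
  have h2 := finrank_perp_add (perp X)
  omega

lemma perp_top : perp (⊤ : Submodule F (Fin n → F)) = ⊥ := by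
  rw [← Submodule.finrank_eq_zero (R := F)]
  have h1 := finrank_perp_add (⊤ : Submodule F (Fin n → F))
  rw [finrank_top] at h1
  have h2 : finrank F (Fin n → F) = n := by rw [finrank_pi]; simp
  omega

variable {m : ℕ}

lemma mem_supportedOn {X : Submodule F (Fin n → F)} {A : Matrix (Fin m) (Fin n) F} :
    A ∈ supportedOn m X ↔ rowSpace A ≤ X := Iff.rfl

/-- `supportedOn m X` is linearly equivalent to `Fin m → X`. -/
def suppEquiv (m : ℕ) (X : Submodule F (Fin n → F)) :
    (supportedOn m X : Submodule F (Matrix (Fin m) (Fin n) F)) ≃ₗ[F] (Fin m → X) where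
  toFun A := fun i => ⟨A.1 i, ((rowSpace_le_iff A.1 X).mp A.2) i⟩
  map_add' A B := rfl
  map_smul' c A := rfl
  invFun f := ⟨Matrix.of fun i j => (f i : Fin n → F) j,
    (rowSpace_le_iff _ X).mpr fun i => (f i).2⟩
  left_inv A := rfl
  right_inv f := rfl

lemma finrank_supportedOn (m : ℕ) (X : Submodule F (Fin n → F)) :
    finrank F (supportedOn m X) = m * finrank F X := by
  rw [LinearEquiv.finrank_eq (suppEquiv m X), Module.finrank_pi_fintype]
  simp [Finset.sum_const, Fintype.card_fin]

lemma supportedOn_mono {X Y : Submodule F (Fin n → F)} (h : X ≤ Y) :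
    supportedOn m X ≤ supportedOn m Y := fun _ hA => le_trans hA h

lemma supportedOn_top : supportedOn m (⊤ : Submodule F (Fin n → F)) = ⊤ := by
  ext A; simp only [mem_supportedOn, Submodule.mem_top, iff_true]; exact le_top

lemma subcode_le (C : Submodule F (Matrix (Fin m) (Fin n) F)) (X : Submodule F (Fin n → F)) :
    subcode C X ≤ C := inf_le_left

lemma subcode_le_supportedOn (C : Submodule F (Matrix (Fin m) (Fin n) F))
    (X : Submodule F (Fin n → F)) : subcode C X ≤ supportedOn m X := inf_le_right

lemma subcode_mono (C : Submodule F (Matrix (Fin m) (Fin n) F)) {X Y : Submodule F (Fin n → F)}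
    (h : X ≤ Y) : subcode C X ≤ subcode C Y :=
  inf_le_inf_left C (supportedOn_mono h)

lemma subcode_top (C : Submodule F (Matrix (Fin m) (Fin n) F)) :
    subcode C ⊤ = C := by rw [subcode, supportedOn_top, inf_top_eq]

lemma subcode_bot (C : Submodule F (Matrix (Fin m) (Fin n) F)) :
    subcode C ⊥ = ⊥ := by
  refine le_antisymm (fun A hA => ?_) bot_le
  have h := (rowSpace_le_iff A ⊥).mp hA.2
  simp only [Submodule.mem_bot]
  funext i
  exact (Submodule.mem_bot F).mp (h i)

lemma finrank_subcode_diff (C : Submodule F (Matrix (Fin m) (Fin n) F))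
    {X Y : Submodule F (Fin n → F)} (h : X ≤ Y) :
    (finrank F (subcode C Y) : ℤ) - finrank F (subcode C X)
      ≤ (finrank F (supportedOn m Y) : ℤ) - finrank F (supportedOn m X) := by
  have hinf : subcode C Y ⊓ supportedOn m X = subcode C X := by
    rw [subcode, subcode, inf_assoc, inf_eq_right.mpr (supportedOn_mono h)]
  have hsum := Submodule.finrank_sup_add_finrank_inf_eq (subcode C Y) (supportedOn m X)
  rw [hinf] at hsum
  have hle : finrank F (subcode C Y ⊔ supportedOn m X : Submodule F _)
      ≤ finrank F (supportedOn m Y) :=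
    Submodule.finrank_mono (sup_le (subcode_le_supportedOn C Y) (supportedOn_mono h))
  omega

lemma finrank_subcode_le (C : Submodule F (Matrix (Fin m) (Fin n) F))
    (X : Submodule F (Fin n → F)) :
    finrank F (subcode C X) ≤ m * finrank F X := by
  rw [← finrank_supportedOn m X]
  exact Submodule.finrank_mono (subcode_le_supportedOn C X)

lemma rhoC_nonneg (C : Submodule F (Matrix (Fin m) (Fin n) F)) (X : Submodule F (Fin n → F)) :
    0 ≤ rhoC C X := by
  have := Submodule.finrank_mono (subcode_le C (perp X))
  unfold rhoC; omega

lemma rhoC_top (C : Submodule F (Matrix (Fin m) (Fin n) F)) :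
    rhoC C (⊤ : Submodule F (Fin n → F)) = finrank F C := by
  rw [rhoC, perp_top, subcode_bot, finrank_bot]; ring

lemma rhoC_perp (C : Submodule F (Matrix (Fin m) (Fin n) F)) (X : Submodule F (Fin n → F)) :
    rhoC C (perp X) = finrank F C - finrank F (subcode C X) := by
  rw [rhoC, perp_perp]

lemma rhoC_mono (C : Submodule F (Matrix (Fin m) (Fin n) F)) {X Y : Submodule F (Fin n → F)}
    (h : X ≤ Y) : rhoC C X ≤ rhoC C Y := by
  have := Submodule.finrank_mono (subcode_mono C (perp_antitone h))
  unfold rhoC; omega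

lemma finrank_supportedOn_diff {X Y : Submodule F (Fin n → F)} (h : X ≤ Y) :
    (finrank F (supportedOn m Y) : ℤ) - finrank F (supportedOn m X)
      = (m : ℤ) * ((finrank F Y : ℤ) - finrank F X) := by
  rw [finrank_supportedOn, finrank_supportedOn]
  push_cast
  ring

lemma rhoC_le (C : Submodule F (Matrix (Fin m) (Fin n) F)) (X : Submodule F (Fin n → F)) :
    rhoC C X ≤ (m : ℤ) * (finrank F X : ℤ) := by
  have key := finrank_subcode_diff C (le_top : perp X ≤ ⊤)
  rw [subcode_top, finrank_supportedOn_diff (le_top : perp X ≤ ⊤)] at key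
  have hp := finrank_perp_add X
  have htop : finrank F (⊤ : Submodule F (Fin n → F)) = n := by
    rw [finrank_top, finrank_pi]; simp
  rw [htop] at key
  have hcast : ((n : ℤ) - finrank F (perp X)) = (finrank F X : ℤ) := by omega
  rw [hcast] at key
  unfold rhoC
  linarith [key]

lemma coNull_rhoC (C : Submodule F (Matrix (Fin m) (Fin n) F)) (X : Submodule F (Fin n → F)) :
    coNull (rhoC C) X = (finrank F (subcode C X) : ℤ) := by
  rw [coNull, rhoC_top, rhoC_perp]; ring

lemma dualRho_rhoC (C : Submodule F (Matrix (Fin m) (Fin n) F)) (X : Submodule F (Fin n → F)) :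
    dualRho m (rhoC C) X
      = (m : ℤ) * (finrank F X : ℤ) - (finrank F (subcode C X) : ℤ) := by
  rw [dualRho, rhoC_top, rhoC_perp]; ring

lemma finrank_transposeCode (C : Submodule F (Matrix (Fin n) (Fin n) F)) :
    finrank F (transposeCode C) = finrank F C := by
  have heq : transposeCode C
      = Submodule.comap ((Matrix.transposeLinearEquiv (Fin n) (Fin n) F F :
          Matrix (Fin n) (Fin n) F ≃ₗ[F] Matrix (Fin n) (Fin n) F) :
          Matrix (Fin n) (Fin n) F →ₗ[F] Matrix (Fin n) (Fin n) F) C := by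
    ext A
    simp only [Submodule.mem_comap, LinearEquiv.coe_coe, Matrix.transposeLinearEquiv_apply]
    rfl
  rw [heq, Submodule.comap_equiv_eq_map_symm, LinearEquiv.finrank_map_eq]

lemma nat_sInf_union {s t : Set ℕ} (hs : s.Nonempty) (ht : t.Nonempty) :
    sInf (s ∪ t) = min (sInf s) (sInf t) := by
  apply le_antisymm
  · exact le_min (Nat.sInf_le (Or.inl (Nat.sInf_mem hs))) (Nat.sInf_le (Or.inr (Nat.sInf_mem ht)))
  · rcases Nat.sInf_mem (hs.mono Set.subset_union_left) with h | h
    · exact (min_le_left _ _).trans (Nat.sInf_le h)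
    · exact (min_le_right _ _).trans (Nat.sInf_le h)

end AuxLemmas

/-- for `m = n`, `ρ(X) = min{ρ_C(X), ρ_{Cᵀ}(X)}` defines a
`(q,n)`-demi-polymatroid whose conullity is `max{dim C(X), dim Cᵀ(X)}` and whose
generalized weights are `min{d_r(P(C)), d_r(P(Cᵀ))}`. -/
theorem square_matrix_demi {F : Type*} [Field F] [Fintype F] {n : ℕ}
    (C : Submodule F (Matrix (Fin n) (Fin n) F)) :
    (∃ D : QMDemiPolymatroid F n n,
      ∀ X : Submodule F (Fin n → F),
        D.rho X = min (rhoC C X) (rhoC (transposeCode C) X)) ∧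
    (∀ X : Submodule F (Fin n → F),
      coNull (fun Z => min (rhoC C Z) (rhoC (transposeCode C) Z)) X
        = max ((finrank F (subcode C X) : ℤ))
            ((finrank F (subcode (transposeCode C) X) : ℤ))) ∧
    (∀ r : ℤ, 1 ≤ r → r ≤ min (rhoC C ⊤) (rhoC (transposeCode C) ⊤) →
      genW (fun Z => min (rhoC C Z) (rhoC (transposeCode C) Z)) r
        = min (genW (rhoC C) r) (genW (rhoC (transposeCode C)) r)) := by
  set D := transposeCode C with hD
  have hcc : (finrank F D : ℤ) = finrank F C := by exact_mod_cast finrank_transposeCode C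
  -- the conullity formula
  have hconull : ∀ X : Submodule F (Fin n → F),
      coNull (fun Z => min (rhoC C Z) (rhoC D Z)) X
        = max ((finrank F (subcode C X) : ℤ)) ((finrank F (subcode D X) : ℤ)) := by
    intro X
    rw [coNull, rhoC_perp, rhoC_perp, rhoC_top, rhoC_top]
    omega
  refine ⟨?_, hconull, ?_⟩
  · -- the demi-polymatroid
    have hdual : ∀ X : Submodule F (Fin n → F),
        dualRho n (fun Z => min (rhoC C Z) (rhoC D Z)) X
          = min (dualRho n (rhoC C) X) (dualRho n (rhoC D) X) := by
      intro X
      simp only [dualRho]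
      rw [rhoC_perp C, rhoC_perp D, rhoC_top C, rhoC_top D]
      set t := (n : ℤ) * (finrank F X : ℤ) with ht
      omega
    refine ⟨⟨fun Z => min (rhoC C Z) (rhoC D Z), ?_, ?_, ?_, ?_, ?_, ?_⟩, fun X => rfl⟩
    · exact fun X => le_min (rhoC_nonneg C X) (rhoC_nonneg D X)
    · exact fun X => (min_le_left _ _).trans (rhoC_le C X)
    · exact fun X Y h => min_le_min (rhoC_mono C h) (rhoC_mono D h)
    · intro X
      rw [hdual, dualRho_rhoC, dualRho_rhoC]
      have h1 : (finrank F (subcode C X) : ℤ) ≤ (n : ℤ) * (finrank F X : ℤ) := by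
        exact_mod_cast finrank_subcode_le C X
      have h2 : (finrank F (subcode D X) : ℤ) ≤ (n : ℤ) * (finrank F X : ℤ) := by
        exact_mod_cast finrank_subcode_le D X
      set t := (n : ℤ) * (finrank F X : ℤ) with ht
      omega
    · intro X
      rw [hdual]
      refine (min_le_left _ _).trans ?_
      rw [dualRho_rhoC]
      have h0 : (0 : ℤ) ≤ (finrank F (subcode C X) : ℤ) := Int.ofNat_nonneg _
      linarith
    · intro X Y h
      rw [hdual, hdual]
      have key1 := finrank_subcode_diff C h
      have key2 := finrank_subcode_diff D h
      rw [finrank_supportedOn_diff h] at key1 key2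
      rw [dualRho_rhoC, dualRho_rhoC, dualRho_rhoC, dualRho_rhoC]
      have hexp : (n : ℤ) * ((finrank F Y : ℤ) - (finrank F X : ℤ))
          = (n : ℤ) * (finrank F Y : ℤ) - (n : ℤ) * (finrank F X : ℤ) := by ring
      rw [hexp] at key1 key2
      exact min_le_min (by linarith) (by linarith)
  · -- generalized weights
    intro r hr1 hr2
    rw [rhoC_top, rhoC_top] at hr2
    unfold genW
    have hset : {d : ℕ | ∃ X : Submodule F (Fin n → F), finrank F X = d ∧
          r ≤ coNull (fun Z => min (rhoC C Z) (rhoC D Z)) X}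
        = {d : ℕ | ∃ X : Submodule F (Fin n → F), finrank F X = d ∧ r ≤ coNull (rhoC C) X}
          ∪ {d : ℕ | ∃ X : Submodule F (Fin n → F), finrank F X = d ∧ r ≤ coNull (rhoC D) X} := by
      ext d
      simp only [Set.mem_setOf_eq, Set.mem_union]
      constructor
      · rintro ⟨X, hX, hle⟩
        rw [hconull X] at hle
        rcases le_max_iff.mp hle with h | h
        · exact Or.inl ⟨X, hX, by rw [coNull_rhoC]; exact h⟩
        · exact Or.inr ⟨X, hX, by rw [coNull_rhoC]; exact h⟩
      · rintro (⟨X, hX, hle⟩ | ⟨X, hX, hle⟩)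
        · exact ⟨X, hX, by rw [hconull X]; rw [coNull_rhoC] at hle; exact le_max_of_le_left hle⟩
        · exact ⟨X, hX, by rw [hconull X]; rw [coNull_rhoC] at hle; exact le_max_of_le_right hle⟩
    rw [hset]
    have hmem1 : (⊤ : Submodule F (Fin n → F)) ∈ Set.univ := trivial
    have hC : (finrank F (⊤ : Submodule F (Fin n → F))) ∈
        {d : ℕ | ∃ X : Submodule F (Fin n → F), finrank F X = d ∧ r ≤ coNull (rhoC C) X} := by
      refine ⟨⊤, rfl, ?_⟩
      rw [coNull_rhoC, subcode_top]
      exact le_trans (le_min_iff.mp hr2).1 le_rfl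
    have hDne : (finrank F (⊤ : Submodule F (Fin n → F))) ∈
        {d : ℕ | ∃ X : Submodule F (Fin n → F), finrank F X = d ∧ r ≤ coNull (rhoC D) X} := by
      refine ⟨⊤, rfl, ?_⟩
      rw [coNull_rhoC, subcode_top]
      exact le_trans (le_min_iff.mp hr2).2 le_rfl
    exact nat_sInf_union ⟨_, hC⟩ ⟨_, hDne⟩
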